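/- Let H be a real inner product space, let a : H × H → ℝ be a symmetric bilinear form with a(v,v) ≥ 0 for all v ∈ H, let ℓ : H → ℝ be a linear functional, and let b₁,…,b_m be distinct positive real numbers. For each i, let u_i ∈ H satisfy a(u_i,φ) + b_i⟨u_i,φ⟩ = ℓ(φ) for all φ ∈ H, and suppose u₁,…,u_m are linearly independent with span V. For each λ > 0, let u_G(λ) ∈ V be the unique element with a(u_G(λ),φ) + λ⟨u_G(λ),φ⟩ = ℓ(φ) for all φ ∈ V, and set F_G(λ) := ℓ(u_G(λ)). Then: (i) there exist real numbers θ₁,…,θ_m ≤ 0 and y₁,…,y_m such that F_G(λ) = Σ_{i=1}^m y_i²/(λ - θ_i) for all λ > 0; (ii) F_G(b_i) = ℓ(u_i) for each i; and (iii) F_G is differentiable at each b_i with F_G'(b_i) = -⟨u_i, u_i⟩. -/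

import Mathlib

open scoped RealInnerProductSpace

set_option maxHeartbeats 1000000 in
/-- abstract Lemma 3.1: with a symmetric positive-semidefinite stiffness form
`a`, receiver functional `ℓ`, distinct positive sample values `b_i`, exact solutions `u_i`
spanning the Galerkin space `V`, and `u_G(λ) ∈ V` the (unique) Galerkin solution for each
`λ > 0`, the Galerkin transfer function `F_G(λ) = ℓ(u_G(λ))` (i) has a pole–residue form
`Σ y_i²/(λ - θ_i)` with `θ_i ≤ 0`, (ii) interpolates `F_G(b_i) = ℓ(u_i)`, and
(iii) is differentiable at each `b_i` with `F_G'(b_i) = -⟨u_i, u_i⟩`. -/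
theorem galerkin_transfer_hermite_interpolation
    {H : Type*} [NormedAddCommGroup H] [InnerProductSpace ℝ H]
    (a : H →ₗ[ℝ] H →ₗ[ℝ] ℝ) (hsym : ∀ x y : H, a x y = a y x)
    (hpos : ∀ v : H, 0 ≤ a v v) (l : H →ₗ[ℝ] ℝ)
    {m : ℕ} (b : Fin m → ℝ) (hbpos : ∀ i, 0 < b i) (hbinj : Function.Injective b)
    (u : Fin m → H)
    (hsol : ∀ i : Fin m, ∀ φ : H, a (u i) φ + b i * ⟪u i, φ⟫ = l φ)
    (hli : LinearIndependent ℝ u)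
    (uG : ℝ → H)
    (huGmem : ∀ lam : ℝ, 0 < lam → uG lam ∈ Submodule.span ℝ (Set.range u))
    (huGsol : ∀ lam : ℝ, 0 < lam → ∀ φ ∈ Submodule.span ℝ (Set.range u),
      a (uG lam) φ + lam * ⟪uG lam, φ⟫ = l φ) :
    (∃ θ y : Fin m → ℝ, (∀ i, θ i ≤ 0) ∧
        ∀ lam : ℝ, 0 < lam → l (uG lam) = ∑ i : Fin m, (y i) ^ 2 / (lam - θ i)) ∧
      (∀ i : Fin m, l (uG (b i)) = l (u i)) ∧
      (∀ i : Fin m, HasDerivAt (fun lam => l (uG lam)) (-⟪u i, u i⟫) (b i)) := by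
  classical
  set V := Submodule.span ℝ (Set.range u) with hVdef
  haveI : FiniteDimensional ℝ V := FiniteDimensional.span_of_finite ℝ (Set.finite_range u)
  -- the bilinear form restricted to V
  set B : V →ₗ[ℝ] V →ₗ[ℝ] ℝ := a.compl₁₂ V.subtype V.subtype with hBdef
  have hB : ∀ x y : V, B x y = a (x : H) (y : H) := fun x y => rfl
  -- the operator T on V representing B against the inner product
  let f := stdOrthonormalBasis ℝ V
  let T : V →ₗ[ℝ] V :=
  { toFun := fun v => ∑ j, B v (f j) • f j
    map_add' := fun v w => by
      simp [map_add, LinearMap.add_apply, add_smul, Finset.sum_add_distrib]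
    map_smul' := fun c v => by
      simp [Finset.smul_sum, smul_smul] }
  have hTapp : ∀ v : V, T v = ∑ j, B v (f j) • f j := fun v => rfl
  have hTinner : ∀ v w : V, ⟪T v, w⟫ = B v w := by
    intro v w
    have hw : B v w = ∑ j, ⟪f j, w⟫ * B v (f j) := by
      conv_lhs => rw [← f.sum_repr' w]
      simp [map_sum, map_smul, smul_eq_mul]
    rw [hTapp, sum_inner, hw]
    congr 1; funext j
    rw [real_inner_smul_left]; ring
  have hTsym : T.IsSymmetric := by
    intro x y
    rw [hTinner, hB, hsym, ← hB, ← hTinner, real_inner_comm]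
  have hn : Module.finrank ℝ V = m := by
    rw [hVdef]
    rw [finrank_span_eq_card hli, Fintype.card_fin]
  set e := hTsym.eigenvectorBasis hn with hedef
  set μ := hTsym.eigenvalues hn with hμdef
  have heig : ∀ j, T (e j) = μ j • e j := fun j => by
    have h := hTsym.apply_eigenvectorBasis hn j
    rw [← hedef, ← hμdef] at h
    exact_mod_cast h
  have hμnn : ∀ j, 0 ≤ μ j := by
    intro j
    have h1 : ⟪T (e j), e j⟫ = μ j := by
      rw [heig, real_inner_smul_left]
      have hone : ⟪(e j : V), e j⟫ = 1 := by
        rw [real_inner_self_eq_norm_sq, e.orthonormal.1 j]; norm_num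
      rw [hone, mul_one]
    have h2 : (0 : ℝ) ≤ B (e j) (e j) := by rw [hB]; exact hpos _
    rw [hTinner] at h1; linarith
  set yv : Fin m → ℝ := fun j => l ((e j : V) : H) with hyv
  -- the coordinates of the Galerkin solution
  have hcoord : ∀ lam : ℝ, ∀ hlam : 0 < lam, ∀ j : Fin m,
      ⟪e j, (⟨uG lam, huGmem lam hlam⟩ : V)⟫ = yv j / (lam + μ j) := by
    intro lam hlam j
    set v : V := (⟨uG lam, huGmem lam hlam⟩ : V) with hv
    have hgal : a (uG lam) ((e j : V) : H) + lam * ⟪uG lam, ((e j : V) : H)⟫ = yv j :=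
      huGsol lam hlam _ (e j).2
    have h1 : a (uG lam) ((e j : V) : H) = μ j * ⟪v, e j⟫ := by
      rw [← hB v (e j), ← hTinner, hTsym v (e j), heig, real_inner_smul_right]
    have h2 : ⟪uG lam, ((e j : V) : H)⟫ = ⟪v, e j⟫ := rfl
    rw [h1, h2] at hgal
    have hc : 0 < lam + μ j := by have := hμnn j; linarith
    rw [real_inner_comm, eq_div_iff (ne_of_gt hc)]
    linear_combination hgal
  -- the linear functional restricted to V
  set lV : V →ₗ[ℝ] ℝ := l.comp V.subtype with hlV
  have hlVe : ∀ j, lV (e j) = yv j := fun j => rfl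
  have hFG : ∀ lam : ℝ, 0 < lam → l (uG lam) = ∑ j, (yv j) ^ 2 / (lam + μ j) := by
    intro lam hlam
    have h0 : l (uG lam) = lV (⟨uG lam, huGmem lam hlam⟩ : V) := rfl
    rw [h0, ← e.sum_repr' (⟨uG lam, huGmem lam hlam⟩ : V), map_sum]
    congr 1; funext j
    rw [map_smul, smul_eq_mul, hlVe, hcoord lam hlam j]
    ring
  have hnorm : ∀ lam : ℝ, 0 < lam →
      ⟪uG lam, uG lam⟫ = ∑ j, (yv j) ^ 2 / (lam + μ j) ^ 2 := by
    intro lam hlam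
    have h0 : ⟪uG lam, uG lam⟫
        = ⟪(⟨uG lam, huGmem lam hlam⟩ : V), (⟨uG lam, huGmem lam hlam⟩ : V)⟫ := rfl
    rw [h0, ← e.sum_inner_mul_inner]
    congr 1; funext j
    rw [hcoord lam hlam j, real_inner_comm, hcoord lam hlam j,
      div_mul_div_comm, ← pow_two, ← pow_two]
  -- interpolation: uG (b i) = u i
  have hinterp : ∀ i : Fin m, uG (b i) = u i := by
    intro i
    have hui : u i ∈ V := Submodule.subset_span (Set.mem_range_self i)
    have hdV : uG (b i) - u i ∈ V := Submodule.sub_mem V (huGmem _ (hbpos i)) hui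
    set d := uG (b i) - u i with hd
    have hzero : a d d + b i * ⟪d, d⟫ = 0 := by
      have h1 := huGsol (b i) (hbpos i) d hdV
      have h2 := hsol i d
      have expand : a d d + b i * ⟪d, d⟫
          = (a (uG (b i)) d + b i * ⟪uG (b i), d⟫) - (a (u i) d + b i * ⟪u i, d⟫) := by
        rw [hd]
        simp only [map_sub, LinearMap.sub_apply, inner_sub_left]
        ring
      rw [expand, h1, h2]
      ring
    have hdd : ⟪d, d⟫ = (0 : ℝ) := by
      have h1 := hpos d
      have h2 := real_inner_self_nonneg (x := d)
      have h3 := hbpos i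
      nlinarith
    have hd0 : d = 0 := inner_self_eq_zero.mp hdd
    exact sub_eq_zero.mp hd0
  refine ⟨⟨fun j => -μ j, yv, fun j => neg_nonpos.mpr (hμnn j), ?_⟩, ?_, ?_⟩
  · intro lam hlam
    rw [hFG lam hlam]
    congr 1; funext j; rw [sub_neg_eq_add]
  · intro i; rw [hinterp i]
  · intro i
    have hderiv : HasDerivAt (fun lam => ∑ j, (yv j) ^ 2 / (lam + μ j))
        (∑ j, -((yv j) ^ 2 / (b i + μ j) ^ 2)) (b i) := by
      apply HasDerivAt.fun_sum
      intro j _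
      have hc : (0 : ℝ) < b i + μ j := by have := hμnn j; have := hbpos i; linarith
      have h1 : HasDerivAt (fun lam : ℝ => lam + μ j) 1 (b i) :=
        (hasDerivAt_id _).add_const _
      have h2 := h1.inv (ne_of_gt hc)
      have h3 := h2.const_mul ((yv j) ^ 2)
      have h4 : HasDerivAt (fun lam : ℝ => (yv j) ^ 2 * (lam + μ j)⁻¹)
          (-((yv j) ^ 2 / (b i + μ j) ^ 2)) (b i) := by
        have hv : -((yv j) ^ 2 / (b i + μ j) ^ 2) = (yv j) ^ 2 * (-1 / (b i + μ j) ^ 2) := by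
          ring
        rw [hv]; exact h3
      simpa only [div_eq_mul_inv] using h4
    have hev : (fun lam => l (uG lam)) =ᶠ[nhds (b i)]
        (fun lam => ∑ j, (yv j) ^ 2 / (lam + μ j)) := by
      filter_upwards [(isOpen_Ioi (a := (0:ℝ))).mem_nhds (hbpos i)] with lam hlam
      exact hFG lam hlam
    have hfinal := hderiv.congr_of_eventuallyEq hev
    have hval : -⟪u i, u i⟫ = ∑ j, -((yv j) ^ 2 / (b i + μ j) ^ 2) := by
      rw [← hinterp i, hnorm (b i) (hbpos i), ← Finset.sum_neg_distrib]
    rw [hval]; exact hfinal
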